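/- Consider an improving k-swap of type-1 from σ to σ'. Then |γ_s(σ')| ≤ |γ_s(σ)|, and for every ℓ with 1 ≤ ℓ ≤ |γ_s(σ')|, the ℓ-th smallest value of the multiset { L_i(σ') : i ∈ γ_s(σ') } is greater than or equal to the ℓ-th smallest value of the multiset { L_i(σ) : i ∈ γ_s(σ) }. -/

import Mathlib

open Finset

/-- The load of machine `i` under schedule `σ` with processing times `p`. -/
noncomputable def load {n m : ℕ} (p : Fin n → ℝ) (σ : Fin n → Fin m) (i : Fin m) : ℝ :=
  ∑ j ∈ Finset.univ.filter (fun j => σ j = i), p j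

/-- The makespan (maximum machine load) of schedule `σ`. -/
noncomputable def Lmax {n m : ℕ} (p : Fin n → ℝ) (σ : Fin n → Fin m) : ℝ :=
  ⨆ i, load p σ i

/-- `δ_min`: the minimum of `|p(A) - p(B)|` over disjoint finsets of jobs `A`, `B`
with `1 ≤ |A| + |B| ≤ k`. -/
noncomputable def deltaMin (n k : ℕ) (p : Fin n → ℝ) : ℝ :=
  sInf { x | ∃ A B : Finset (Fin n), Disjoint A B ∧ 1 ≤ A.card + B.card ∧
    A.card + B.card ≤ k ∧ x = |∑ j ∈ A, p j - ∑ j ∈ B, p j| }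

/-- An improving `k`-swap from `σ` to `σ'`, with critical machine `i`, machine `i' ≠ i`,
and disjoint job sets `A ⊆ σ⁻¹ {i}`, `B ⊆ σ⁻¹ {i'}` with `|A| ≥ 1`, `|A| + |B| ≤ k` and
`0 < p(A) - p(B) < L_i(σ) - L_{i'}(σ)`; `σ'` sends `A` to `i'`, `B` to `i`, and agrees
with `σ` elsewhere. -/
def IsImprovingKSwap (k : ℕ) {n m : ℕ} (p : Fin n → ℝ) (σ σ' : Fin n → Fin m)
    (i i' : Fin m) (A B : Finset (Fin n)) : Prop :=
  load p σ i = Lmax p σ ∧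
  i' ≠ i ∧
  Disjoint A B ∧
  (∀ j ∈ A, σ j = i) ∧ (∀ j ∈ B, σ j = i') ∧
  1 ≤ A.card ∧ A.card + B.card ≤ k ∧
  0 < (∑ j ∈ A, p j) - ∑ j ∈ B, p j ∧
  (∑ j ∈ A, p j) - (∑ j ∈ B, p j) < load p σ i - load p σ i' ∧
  (∀ j ∈ A, σ' j = i') ∧ (∀ j ∈ B, σ' j = i) ∧
  ∀ j, j ∉ A → j ∉ B → σ' j = σ j

/-- The set `γ_s(σ)` of machines whose load is at most `L_max(σ) - δ_min`. -/
noncomputable def gammaS (k : ℕ) {n m : ℕ} (p : Fin n → ℝ) (σ : Fin n → Fin m) :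
    Finset (Fin m) :=
  Finset.univ.filter (fun i => load p σ i ≤ Lmax p σ - deltaMin n k p)

/-- The potential `Φ(σ) = ∑_{(i,i')} |L_i(σ) - L_{i'}(σ)|` over ordered pairs of machines. -/
noncomputable def potential {n m : ℕ} (p : Fin n → ℝ) (σ : Fin n → Fin m) : ℝ :=
  ∑ i : Fin m, ∑ i' : Fin m, |load p σ i - load p σ i'|


/-- The multiset of loads of the machines in `γ_s(σ)`, sorted in nondecreasing order. -/
noncomputable def sortedGammaSLoads (k : ℕ) {n m : ℕ} (p : Fin n → ℝ)
    (σ : Fin n → Fin m) : List ℝ :=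
  Multiset.sort ((gammaS k p σ).val.map (load p σ)) (· ≤ ·)


private lemma listA_aux (x : ℝ) : ∀ (l : List ℝ), l.Pairwise (· ≤ ·) →
    ∀ ℓ, ℓ < l.countP (fun a => decide (a ≤ x)) → l.getD ℓ 0 ≤ x := by
  intro l
  induction l with
  | nil => intro _ ℓ h; simp at h
  | cons a t ih =>
    intro hs ℓ h
    rw [List.pairwise_cons] at hs
    by_cases hax : a ≤ x
    · cases ℓ with
      | zero => simpa using hax
      | succ ℓ =>
        rw [List.getD_cons_succ]
        apply ih hs.2
        rw [List.countP_cons] at h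
        simp [hax] at h
        omega
    · exfalso
      have : t.countP (fun a => decide (a ≤ x)) = 0 := by
        rw [List.countP_eq_zero]
        intro b hb
        simp only [decide_eq_true_eq]
        intro hbx
        exact hax (le_trans (hs.1 b hb) hbx)
      rw [List.countP_cons] at h
      simp [hax, this] at h

private lemma listB_aux (x : ℝ) : ∀ (l : List ℝ), l.Pairwise (· ≤ ·) →
    ∀ ℓ, ℓ < l.length → l.getD ℓ 0 ≤ x → ℓ < l.countP (fun a => decide (a ≤ x)) := by
  intro l
  induction l with
  | nil => intro _ ℓ h; simp at h
  | cons a t ih =>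
    intro hs ℓ hlen hle
    rw [List.pairwise_cons] at hs
    cases ℓ with
    | zero =>
      rw [List.getD_cons_zero] at hle
      rw [List.countP_cons]
      simp [hle]
    | succ ℓ =>
      rw [List.getD_cons_succ] at hle
      have hlen' : ℓ < t.length := by simpa using hlen
      have := ih hs.2 ℓ hlen' hle
      have hax : a ≤ x := by
        have hmem : t.getD ℓ 0 ∈ t := by
          rw [List.getD_eq_getElem t 0 hlen']
          exact List.getElem_mem _
        exact le_trans (hs.1 _ hmem) hle
      rw [List.countP_cons]
      simp [hax]
      omega

private lemma sorted_getD_mono_aux (s t : Multiset ℝ)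
    (hcount : ∀ x : ℝ, s.countP (fun a => a ≤ x) ≤ t.countP (fun a => a ≤ x)) :
    ∀ ℓ, ℓ < Multiset.card s →
      (t.sort (· ≤ ·)).getD ℓ 0 ≤ (s.sort (· ≤ ·)).getD ℓ 0 := by
  intro ℓ hℓ
  set x := (s.sort (· ≤ ·)).getD ℓ 0 with hx
  have hslen : (s.sort (· ≤ ·)).length = Multiset.card s := Multiset.length_sort _
  have key : ∀ (u : Multiset ℝ),
      (u.sort (· ≤ ·)).countP (fun a => decide (a ≤ x)) = u.countP (fun a => a ≤ x) := by
    intro u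
    conv_rhs => rw [← Multiset.sort_eq u (· ≤ ·)]
    exact (Multiset.coe_countP _ _).symm
  have h1 : ℓ < s.countP (fun a => a ≤ x) := by
    rw [← key]
    exact listB_aux x _ (Multiset.pairwise_sort s _) ℓ (by omega) le_rfl
  apply listA_aux x _ (Multiset.pairwise_sort t _)
  rw [key]
  exact lt_of_lt_of_le h1 (hcount x)

/-- For an improving `k`-swap of type-1 (i.e. `i' ∈ γ_l(σ')`) from `σ` to `σ'`:
`|γ_s(σ')| ≤ |γ_s(σ)|`, and for every position `ℓ` (here `0`-indexed) below `|γ_s(σ')|`,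
the `ℓ`-th smallest load of a machine in `γ_s(σ')` under `σ'` is at least the `ℓ`-th
smallest load of a machine in `γ_s(σ)` under `σ`. -/
theorem gammaS_loads_pointwise_nondecreasing {n m k : ℕ} (hm : 2 ≤ m) (hk : 1 ≤ k)
    (p : Fin n → ℝ) (hp : ∀ j, 0 < p j) (hδ : 0 < deltaMin n k p)
    (σ σ' : Fin n → Fin m) (i i' : Fin m) (A B : Finset (Fin n))
    (hswap : IsImprovingKSwap k p σ σ' i i' A B)
    (htype1 : i' ∉ gammaS k p σ') :
    (gammaS k p σ').card ≤ (gammaS k p σ).card ∧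
    ∀ ℓ : ℕ, ℓ < (gammaS k p σ').card →
      (sortedGammaSLoads k p σ).getD ℓ 0 ≤ (sortedGammaSLoads k p σ').getD ℓ 0 := by
  have hne : Nonempty (Fin m) := ⟨⟨0, by omega⟩⟩
  obtain ⟨hcrit, hii, hAB, hAσ, hBσ, hA1, hABk, hΔpos, hΔlt, hAσ', hBσ', hout⟩ := hswap
  set δ := deltaMin n k p with hδdef
  set Δ := (∑ j ∈ A, p j) - ∑ j ∈ B, p j with hΔdef
  -- subsets
  have hAsub : A ⊆ Finset.univ.filter (fun j => σ j = i) := by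
    intro j hj; simp [hAσ j hj]
  have hBsub : B ⊆ Finset.univ.filter (fun j => σ j = i') := by
    intro j hj; simp [hBσ j hj]
  -- load under σ' on machine i
  have hfi : Finset.univ.filter (fun j => σ' j = i) =
      ((Finset.univ.filter (fun j => σ j = i)) \ A) ∪ B := by
    ext j
    simp only [mem_filter, mem_union, mem_sdiff, mem_univ, true_and]
    by_cases hjA : j ∈ A
    · have hjB : j ∉ B := Finset.disjoint_left.mp hAB hjA
      simp [hjA, hjB, hAσ' j hjA, hii]
    · by_cases hjB : j ∈ B
      · simp [hjB, hBσ' j hjB]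
      · simp [hjA, hjB, hout j hjA hjB]
  have hBdisj : Disjoint ((Finset.univ.filter (fun j => σ j = i)) \ A) B := by
    rw [Finset.disjoint_right]
    intro j hjB hjX
    simp only [mem_sdiff, mem_filter, mem_univ, true_and] at hjX
    exact hii (by rw [← hBσ j hjB, hjX.1])
  have hloadi : load p σ' i = load p σ i - Δ := by
    rw [load, hfi, Finset.sum_union hBdisj, Finset.sum_sdiff_eq_sub hAsub, hΔdef, load]
    ring
  -- load under σ' on machine i'
  have hfi' : Finset.univ.filter (fun j => σ' j = i') =
      ((Finset.univ.filter (fun j => σ j = i')) \ B) ∪ A := by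
    ext j
    simp only [mem_filter, mem_union, mem_sdiff, mem_univ, true_and]
    by_cases hjA : j ∈ A
    · simp [hjA, hAσ' j hjA]
    · by_cases hjB : j ∈ B
      · simp [hjA, hjB, hBσ' j hjB, Ne.symm hii]
      · simp [hjA, hjB, hout j hjA hjB]
  have hAdisj : Disjoint ((Finset.univ.filter (fun j => σ j = i')) \ B) A := by
    rw [Finset.disjoint_right]
    intro j hjA hjX
    simp only [mem_sdiff, mem_filter, mem_univ, true_and] at hjX
    exact hii (by rw [← hjX.1, hAσ j hjA])
  have hloadi' : load p σ' i' = load p σ i' + Δ := by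
    rw [load, hfi', Finset.sum_union hAdisj, Finset.sum_sdiff_eq_sub hBsub, hΔdef, load]
    ring
  -- loads elsewhere agree
  have hloadh : ∀ h : Fin m, h ≠ i → h ≠ i' → load p σ' h = load p σ h := by
    intro h hhi hhi'
    unfold load
    congr 1
    ext j
    simp only [mem_filter, mem_univ, true_and]
    by_cases hjA : j ∈ A
    · simp [hAσ' j hjA, hAσ j hjA, Ne.symm hhi, Ne.symm hhi']
    · by_cases hjB : j ∈ B
      · simp [hBσ' j hjB, hBσ j hjB, Ne.symm hhi, Ne.symm hhi']
      · rw [hout j hjA hjB]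
  -- Lmax bounds
  have hle : ∀ h : Fin m, load p σ h ≤ Lmax p σ :=
    fun h => le_ciSup (Set.finite_range _).bddAbove h
  have hle' : ∀ h : Fin m, load p σ' h ≤ Lmax p σ' :=
    fun h => le_ciSup (Set.finite_range _).bddAbove h
  have hLmax' : Lmax p σ' ≤ Lmax p σ := by
    apply ciSup_le
    intro h
    by_cases hhi : h = i
    · subst hhi
      rw [hloadi]
      linarith [hle h]
    · by_cases hhi' : h = i'
      · subst hhi'
        rw [hloadi']
        linarith [hcrit ▸ hΔlt]
      · rw [hloadh h hhi hhi']
        exact hle h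
  -- δ ≤ Δ
  have hδΔ : δ ≤ Δ := by
    have habs : Δ = |(∑ j ∈ A, p j) - ∑ j ∈ B, p j| := (abs_of_pos hΔpos).symm
    apply csInf_le
    · refine ⟨0, fun x hx => ?_⟩
      obtain ⟨A', B', _, _, _, hx⟩ := hx
      rw [hx]; exact abs_nonneg _
    · exact ⟨A, B, hAB, by omega, hABk, habs⟩
  -- key membership facts
  have hi'γσ : i' ∈ gammaS k p σ := by
    simp only [gammaS, mem_filter, mem_univ, true_and]
    have h1 : load p σ i' < Lmax p σ - Δ := by
      rw [← hcrit]; linarith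
    linarith
  have hiγσ : i ∉ gammaS k p σ := by
    simp only [gammaS, mem_filter, mem_univ, true_and]
    rw [hcrit]
    linarith
  have hloadi'le : load p σ i' ≤ load p σ' i := by
    rw [hloadi]; linarith
  have hmemσ' : ∀ h : Fin m, h ∈ gammaS k p σ' ↔
      load p σ' h ≤ Lmax p σ' - δ := by
    intro h; simp [gammaS]; exact Iff.rfl
  have hmemσ : ∀ h : Fin m, h ∈ gammaS k p σ ↔
      load p σ h ≤ Lmax p σ - δ := by
    intro h; simp [gammaS]; exact Iff.rfl
  have hother : ∀ h : Fin m, h ≠ i → h ≠ i' → h ∈ gammaS k p σ' → h ∈ gammaS k p σ := by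
    intro h hhi hhi' hmem
    rw [hmemσ' h, hloadh h hhi hhi'] at hmem
    rw [hmemσ h]
    linarith
  -- the injection, applied to filtered sets
  have hinjcard : ∀ (q : ℝ → Prop) [DecidablePred q],
      (∀ h : Fin m, h ∈ gammaS k p σ' → h ≠ i → q (load p σ' h) → q (load p σ h)) →
      (q (load p σ' i) → q (load p σ i')) →
      ((gammaS k p σ').filter (fun h => q (load p σ' h))).card ≤
        ((gammaS k p σ).filter (fun h => q (load p σ h))).card := by
    intro q _ hq1 hq2
    apply Finset.card_le_card_of_injOn (fun h => if h = i then i' else h)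
    · intro h hh
      simp only [mem_coe, mem_filter] at hh
      by_cases hhi : h = i
      · subst hhi
        simp only [if_pos rfl, mem_coe, mem_filter]
        exact ⟨hi'γσ, hq2 hh.2⟩
      · have hhi' : h ≠ i' := by
          intro hcon; subst hcon; exact htype1 hh.1
        simp only [if_neg hhi, mem_coe, mem_filter]
        exact ⟨hother h hhi hhi' hh.1, hq1 h hh.1 hhi hh.2⟩
    · intro a ha b hb hab
      simp only [Finset.coe_filter, Set.mem_setOf_eq] at ha hb
      by_cases hai : a = i <;> by_cases hbi : b = i
      · rw [hai, hbi]
      · exfalso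
        simp only [if_pos hai, if_neg hbi] at hab
        exact htype1 (hab ▸ hb.1)
      · exfalso
        simp only [if_neg hai, if_pos hbi] at hab
        exact htype1 (hab ▸ ha.1)
      · simpa only [if_neg hai, if_neg hbi] using hab
  constructor
  · -- cardinality claim
    have := hinjcard (fun _ => True) (fun _ _ _ _ => trivial) (fun _ => trivial)
    simpa using this
  · -- pointwise claim
    intro ℓ hℓ
    unfold sortedGammaSLoads
    apply sorted_getD_mono_aux
    · intro x
      rw [Multiset.countP_map, Multiset.countP_map]
      have e1 : ∀ (S : Finset (Fin m)) (τ : Fin n → Fin m),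
          Multiset.card (S.val.filter (fun a => load p τ a ≤ x)) =
            (S.filter (fun a => load p τ a ≤ x)).card := by
        intro S τ; rfl
      rw [e1, e1]
      apply hinjcard (fun y => y ≤ x)
      · intro h hh hhi hxh
        have hhi' : h ≠ i' := by
          intro hcon; subst hcon; exact htype1 hh
        rw [hloadh h hhi hhi'] at hxh
        exact hxh
      · intro hxh
        exact le_trans hloadi'le hxh
    · rw [Multiset.card_map]
      exact hℓ
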